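/- Let β ∈ L^∞[0,∞) have mean value zero, i.e. lim_{T→∞} (1/T)∫₀^T β = 0. Then for every f ∈ L¹[0,∞), ∫₀^∞ β(Nt) f(t) dt → 0 as N → ∞. -/

import Mathlib

open MeasureTheory Filter

namespace RLAux

/-- A bounded measurable function is interval integrable. -/
lemma intInt {β : ℝ → ℝ} (hm : Measurable β) {M : ℝ} (hb : ∀ t, |β t| ≤ M)
    (a b : ℝ) : IntervalIntegrable β volume a b := by
  rw [intervalIntegrable_iff]
  exact Measure.integrableOn_of_bounded measure_Ioc_lt_top.ne hm.aestronglyMeasurable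
    (ae_of_all _ fun t => by simpa [Real.norm_eq_abs] using hb t)

lemma tendsto_inv_mul_B {β : ℝ → ℝ}
    (hmean : Tendsto (fun T : ℝ => (1 / T) * ∫ t in (0:ℝ)..T, β t) atTop (nhds 0))
    {c : ℝ} (hc : 0 ≤ c) :
    Tendsto (fun N : ℝ => N⁻¹ * ∫ t in (0:ℝ)..(N * c), β t) atTop (nhds 0) := by
  rcases hc.eq_or_lt with h0 | hc
  · simp [← h0]
  · have h1 : Tendsto (fun N : ℝ => N * c) atTop atTop :=
      Tendsto.atTop_mul_const hc tendsto_id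
    have h2 := (hmean.comp h1).const_mul c
    rw [mul_zero] at h2
    apply h2.congr'
    filter_upwards [eventually_gt_atTop (0:ℝ)] with N hN
    show c * ((1 / (N * c)) * ∫ t in (0:ℝ)..(N * c), β t) = _
    rw [one_div, mul_inv]
    field_simp

lemma tendsto_interval {β : ℝ → ℝ} (hm : Measurable β) {M : ℝ} (hb : ∀ t, |β t| ≤ M)
    (hmean : Tendsto (fun T : ℝ => (1 / T) * ∫ t in (0:ℝ)..T, β t) atTop (nhds 0))
    {a b : ℝ} (ha : 0 ≤ a) (hb' : 0 ≤ b) :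
    Tendsto (fun N : ℝ => ∫ t in a..b, β (N * t)) atTop (nhds 0) := by
  have hA := tendsto_inv_mul_B hmean ha
  have hB := tendsto_inv_mul_B hmean hb'
  have h := hB.sub hA
  rw [sub_zero] at h
  apply h.congr'
  filter_upwards [eventually_gt_atTop (0:ℝ)] with N hN
  show N⁻¹ * _ - N⁻¹ * _ = _
  rw [← mul_sub, intervalIntegral.integral_interval_sub_left
      (intInt hm hb 0 (N * b)) (intInt hm hb 0 (N * a)),
    intervalIntegral.integral_comp_mul_left β hN.ne', smul_eq_mul]

/-- The main estimate for continuous compactly supported functions. -/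
lemma tendsto_cc {β : ℝ → ℝ} (hm : Measurable β) {M : ℝ} (hb : ∀ t, |β t| ≤ M)
    (hmean : Tendsto (fun T : ℝ => (1 / T) * ∫ t in (0:ℝ)..T, β t) atTop (nhds 0))
    (g : ℝ → ℝ) (hgc : Continuous g) (hgs : HasCompactSupport g) :
    Tendsto (fun N : ℝ => ∫ t in Set.Ioi (0:ℝ), β (N * t) * g t) atTop (nhds 0) := by
  have hM0 : 0 ≤ M := (abs_nonneg _).trans (hb 0)
  obtain ⟨R, hR0, hR⟩ := hgs.exists_pos_le_norm
  rw [NormedAddCommGroup.tendsto_nhds_zero]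
  intro ε hε
  have hgu : UniformContinuous g :=
    hgc.uniformContinuous_of_tendsto_cocompact hgs.is_zero_at_infty
  set ε₁ := ε / (2 * (M + 1) * (R + 1)) with hε₁def
  have hε₁ : 0 < ε₁ := by positivity
  obtain ⟨δ, hδ0, hδ⟩ := Metric.uniformContinuous_iff.mp hgu ε₁ hε₁
  -- choose the partition
  obtain ⟨K, hK⟩ := exists_nat_gt (R / δ)
  have hK0 : 0 < (K : ℝ) := lt_of_le_of_lt (div_nonneg hR0.le hδ0.le) hK
  set d := R / K with hddef
  have hd0 : 0 < d := div_pos hR0 hK0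
  have hdδ : d < δ := by
    rw [hddef, div_lt_iff₀ hK0]
    calc R = (R / δ) * δ := by field_simp
    _ < K * δ := by gcongr
    _ = δ * K := by ring
  have hKd : (K : ℝ) * d = R := by
    rw [hddef]; field_simp
  -- integrability facts
  have hmesN : ∀ N : ℝ, Measurable fun t => β (N * t) :=
    fun N => hm.comp (measurable_id.const_mul N)
  have hbN : ∀ N t : ℝ, |β (N * t)| ≤ M := fun N t => hb _
  have hint : ∀ N : ℝ, Integrable (fun t => β (N * t) * g t) volume := fun N =>
    (hgc.integrable_of_hasCompactSupport hgs).bdd_mul (hmesN N).aestronglyMeasurable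
      (c := M) (ae_of_all _ fun t => by simpa [Real.norm_eq_abs] using hbN N t)
  -- the partition points
  set a : ℕ → ℝ := fun k => (k : ℝ) * d with hadef
  have ha0 : ∀ k : ℕ, 0 ≤ a k := fun k => mul_nonneg (Nat.cast_nonneg k) hd0.le
  have hastep : ∀ k : ℕ, a (k + 1) - a k = d := by
    intro k; simp only [hadef]; push_cast; ring
  have hamono : ∀ k : ℕ, a k ≤ a (k + 1) := fun k => by
    have := hastep k; linarith
  -- the approximating sums
  set S : ℝ → ℝ := fun N =>
    ∑ k ∈ Finset.range K, g (a k) * ∫ t in (a k)..(a (k + 1)), β (N * t)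
    with hSdef
  have hS : Tendsto S atTop (nhds 0) := by
    rw [hSdef]
    have := tendsto_finset_sum (Finset.range K) fun k (_ : k ∈ Finset.range K) =>
      (tendsto_interval hm hb hmean (ha0 k) (ha0 (k + 1))).const_mul (g (a k))
    simp only [mul_zero, Finset.sum_const_zero] at this
    exact this
  have hSmall : M * ε₁ * R ≤ ε / 2 := by
    have h1 : M * R ≤ (M + 1) * (R + 1) := by nlinarith
    have h2 : (0:ℝ) < 2 * (M + 1) * (R + 1) := by positivity
    calc M * ε₁ * R = (M * R) * (ε / (2 * (M + 1) * (R + 1))) := by ring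
      _ ≤ ((M + 1) * (R + 1)) * (ε / (2 * (M + 1) * (R + 1))) := by
          apply mul_le_mul_of_nonneg_right h1 (by positivity)
      _ = ε / 2 := by field_simp
  rw [NormedAddCommGroup.tendsto_nhds_zero] at hS
  filter_upwards [hS (ε / 2) (half_pos hε)] with N hSN
  -- rewrite the integral as an interval integral over [0, R]
  have hzero : ∫ t in Set.Ioi R, β (N * t) * g t = 0 := by
    apply setIntegral_eq_zero_of_forall_eq_zero
    intro t ht
    have : g t = 0 := hR t (by rw [Real.norm_eq_abs, abs_of_pos (hR0.trans ht)]; exact ht.le)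
    rw [this, mul_zero]
  have hsplit : ∫ t in Set.Ioi (0:ℝ), β (N * t) * g t
      = ∫ t in (0:ℝ)..R, β (N * t) * g t := by
    rw [intervalIntegral.integral_of_le hR0.le, ← Set.Ioc_union_Ioi_eq_Ioi hR0.le,
      setIntegral_union (Set.Ioc_disjoint_Ioi le_rfl) measurableSet_Ioi
        (hint N).integrableOn (hint N).integrableOn, hzero, add_zero]
  -- split into subintervals
  have ha0' : a 0 = 0 := by simp [hadef]
  have haK : a K = R := by rw [hadef]; exact hKd
  have hadj : ∫ t in (0:ℝ)..R, β (N * t) * g t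
      = ∑ k ∈ Finset.range K, ∫ t in (a k)..(a (k + 1)), β (N * t) * g t := by
    rw [← ha0', ← haK]
    exact (intervalIntegral.sum_integral_adjacent_intervals
      (fun k _ => (hint N).intervalIntegrable)).symm
  -- per-interval bound
  have hterm : ∀ k ∈ Finset.range K,
      ‖(∫ t in (a k)..(a (k + 1)), β (N * t) * g t)
        - g (a k) * ∫ t in (a k)..(a (k + 1)), β (N * t)‖
        ≤ M * ε₁ * d := by
    intro k _
    rw [← intervalIntegral.integral_const_mul, ← intervalIntegral.integral_sub
      (hint N).intervalIntegrable
      (((intInt (hmesN N) (fun t => hbN N t) _ _)).const_mul _)]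
    have hbd : ∀ x ∈ Set.uIoc (a k) (a (k + 1)),
        ‖β (N * x) * g x - g (a k) * β (N * x)‖ ≤ M * ε₁ := by
      intro x hx
      rw [Set.uIoc_of_le (hamono k)] at hx
      have hxd : dist x (a k) < δ := by
        rw [Real.dist_eq, abs_of_pos (sub_pos.mpr hx.1)]
        have h2 := hx.2
        have h3 := hastep k
        have : x - a k ≤ d := by linarith
        linarith
      have hgx : |g x - g (a k)| ≤ ε₁ := by
        have := hδ hxd
        rw [Real.dist_eq] at this
        exact this.le
      calc ‖β (N * x) * g x - g (a k) * β (N * x)‖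
          = |β (N * x)| * |g x - g (a k)| := by
            rw [Real.norm_eq_abs, ← abs_mul]; congr 1; ring
        _ ≤ M * ε₁ := mul_le_mul (hbN N x) hgx (abs_nonneg _) hM0
    have hni := intervalIntegral.norm_integral_le_of_norm_le_const hbd
    calc ‖∫ t in (a k)..(a (k + 1)), (β (N * t) * g t - g (a k) * β (N * t))‖
        ≤ M * ε₁ * |a (k + 1) - a k| := hni
      _ = M * ε₁ * d := by rw [hastep k, abs_of_pos hd0]
  -- total bound
  have hdiff : ‖(∫ t in Set.Ioi (0:ℝ), β (N * t) * g t) - S N‖ ≤ M * ε₁ * R := by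
    rw [hsplit, hadj, hSdef, ← Finset.sum_sub_distrib]
    calc ‖∑ k ∈ Finset.range K, ((∫ t in (a k)..(a (k + 1)), β (N * t) * g t)
          - g (a k) * ∫ t in (a k)..(a (k + 1)), β (N * t))‖
        ≤ ∑ k ∈ Finset.range K, ‖(∫ t in (a k)..(a (k + 1)), β (N * t) * g t)
          - g (a k) * ∫ t in (a k)..(a (k + 1)), β (N * t)‖ :=
          norm_sum_le _ _
      _ ≤ ∑ _k ∈ Finset.range K, M * ε₁ * d := Finset.sum_le_sum hterm
      _ = K * (M * ε₁ * d) := by rw [Finset.sum_const, Finset.card_range, nsmul_eq_mul]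
      _ = M * ε₁ * ((K:ℝ) * d) := by ring
      _ = M * ε₁ * R := by rw [hKd]
  calc ‖∫ t in Set.Ioi (0:ℝ), β (N * t) * g t‖
      = ‖((∫ t in Set.Ioi (0:ℝ), β (N * t) * g t) - S N) + S N‖ := by rw [sub_add_cancel]
    _ ≤ ‖(∫ t in Set.Ioi (0:ℝ), β (N * t) * g t) - S N‖ + ‖S N‖ := norm_add_le _ _
    _ < (ε / 2) + (ε / 2) := by
        apply add_lt_add_of_le_of_lt (hdiff.trans hSmall) hSN
    _ = ε := add_halves ε

/-- The main lemma, for a globally bounded `β`. -/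
lemma main {β : ℝ → ℝ} (hm : Measurable β) {M : ℝ} (hb : ∀ t, |β t| ≤ M)
    (hmean : Tendsto (fun T : ℝ => (1 / T) * ∫ t in (0:ℝ)..T, β t) atTop (nhds 0))
    (f : ℝ → ℝ) (hf : IntegrableOn f (Set.Ioi (0:ℝ))) :
    Tendsto (fun N : ℝ => ∫ t in Set.Ioi (0:ℝ), β (N * t) * f t) atTop (nhds 0) := by
  have hM0 : 0 ≤ M := (abs_nonneg _).trans (hb 0)
  rw [NormedAddCommGroup.tendsto_nhds_zero]
  intro ε hε
  set f₁ := Set.indicator (Set.Ioi (0:ℝ)) f with hf₁def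
  have hf₁ : Integrable f₁ volume := (integrable_indicator_iff measurableSet_Ioi).mpr hf
  obtain ⟨g, hgs, hfg, hgc, hgi⟩ := hf₁.exists_hasCompactSupport_integral_sub_le
    (show (0:ℝ) < ε / (2 * (M + 1)) by positivity)
  have hg0 := tendsto_cc hm hb hmean g hgc hgs
  rw [NormedAddCommGroup.tendsto_nhds_zero] at hg0
  filter_upwards [hg0 (ε / 2) (half_pos hε)] with N hN
  have hmesN : Measurable fun t : ℝ => β (N * t) := hm.comp (measurable_id.const_mul N)
  have hintf : IntegrableOn (fun t => β (N * t) * f t) (Set.Ioi (0:ℝ)) :=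
    hf.bdd_mul hmesN.aestronglyMeasurable.restrict
      (c := M) (ae_of_all _ fun t => by simpa [Real.norm_eq_abs] using hb (N * t))
  have hintg : IntegrableOn (fun t => β (N * t) * g t) (Set.Ioi (0:ℝ)) :=
    ((hgc.integrable_of_hasCompactSupport hgs).bdd_mul hmesN.aestronglyMeasurable
      (c := M) (ae_of_all _ fun t => by simpa [Real.norm_eq_abs] using hb (N * t))).integrableOn
  have hdiffInt : Integrable (fun t => M * ‖f₁ t - g t‖) volume :=
    ((hf₁.sub hgi).norm.const_mul M)
  have hkey : ‖(∫ t in Set.Ioi (0:ℝ), β (N * t) * f t)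
      - ∫ t in Set.Ioi (0:ℝ), β (N * t) * g t‖ ≤ M * (ε / (2 * (M + 1))) := by
    rw [← integral_sub hintf hintg]
    calc ‖∫ t in Set.Ioi (0:ℝ), (β (N * t) * f t - β (N * t) * g t)‖
        ≤ ∫ t in Set.Ioi (0:ℝ), ‖β (N * t) * f t - β (N * t) * g t‖ :=
          norm_integral_le_integral_norm _
      _ ≤ ∫ t in Set.Ioi (0:ℝ), M * ‖f₁ t - g t‖ := by
          apply integral_mono_of_nonneg (ae_of_all _ fun t => norm_nonneg _)
            hdiffInt.integrableOn
          have hae : ∀ᵐ t ∂(volume.restrict (Set.Ioi (0:ℝ))),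
              ‖β (N * t) * f t - β (N * t) * g t‖ ≤ M * ‖f₁ t - g t‖ := by
            rw [ae_restrict_iff' measurableSet_Ioi]
            apply ae_of_all
            intro t ht
            have hft : f₁ t = f t := Set.indicator_of_mem ht f
            calc ‖β (N * t) * f t - β (N * t) * g t‖ = |β (N * t)| * ‖f t - g t‖ := by
                  rw [Real.norm_eq_abs, Real.norm_eq_abs, ← abs_mul]; congr 1; ring
              _ ≤ M * ‖f₁ t - g t‖ := by
                  rw [hft]
                  exact mul_le_mul_of_nonneg_right (hb _) (norm_nonneg _)
          exact hae
      _ ≤ ∫ t, M * ‖f₁ t - g t‖ :=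
          setIntegral_le_integral hdiffInt
            (ae_of_all _ fun t => by positivity)
      _ = M * ∫ t, ‖f₁ t - g t‖ := integral_const_mul M _
      _ ≤ M * (ε / (2 * (M + 1))) := mul_le_mul_of_nonneg_left hfg hM0
  have hhalf : M * (ε / (2 * (M + 1))) ≤ ε / 2 := by
    have heq : M * (ε / (2 * (M + 1))) = (M / (M + 1)) * (ε / 2) := by
      rw [div_mul_div_comm, mul_div_assoc', mul_comm (M + 1) 2]
    have h1 : M / (M + 1) ≤ 1 := by
      rw [div_le_one (by positivity)]; linarith
    rw [heq]
    calc (M / (M + 1)) * (ε / 2) ≤ 1 * (ε / 2) :=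
          mul_le_mul_of_nonneg_right h1 (by positivity)
      _ = ε / 2 := one_mul _
  calc ‖∫ t in Set.Ioi (0:ℝ), β (N * t) * f t‖
      = ‖((∫ t in Set.Ioi (0:ℝ), β (N * t) * f t)
          - ∫ t in Set.Ioi (0:ℝ), β (N * t) * g t)
          + ∫ t in Set.Ioi (0:ℝ), β (N * t) * g t‖ := by rw [sub_add_cancel]
    _ ≤ ‖(∫ t in Set.Ioi (0:ℝ), β (N * t) * f t)
          - ∫ t in Set.Ioi (0:ℝ), β (N * t) * g t‖
          + ‖∫ t in Set.Ioi (0:ℝ), β (N * t) * g t‖ := norm_add_le _ _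
    _ < (ε / 2) + (ε / 2) := add_lt_add_of_le_of_lt (hkey.trans hhalf) hN
    _ = ε := add_halves ε

end RLAux

/-- Zero-mean case of the generalized Riemann–Lebesgue lemma. -/
theorem riemann_lebesgue_zero_mean
    (β : ℝ → ℝ)
    (hβm : Measurable β)
    (hβb : ∃ M : ℝ, ∀ t : ℝ, 0 ≤ t → |β t| ≤ M)
    (hmean : Tendsto (fun T : ℝ => (1 / T) * ∫ t in (0:ℝ)..T, β t) atTop (nhds 0))
    (f : ℝ → ℝ) (hf : IntegrableOn f (Set.Ioi (0:ℝ))) :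
    Tendsto (fun N : ℝ => ∫ t in Set.Ioi (0:ℝ), β (N * t) * f t) atTop (nhds 0) := by
  obtain ⟨M, hM⟩ := hβb
  set β' : ℝ → ℝ := fun t => if 0 ≤ t then β t else 0 with hβ'def
  have hm' : Measurable β' := Measurable.ite measurableSet_Ici hβm measurable_const
  have hb' : ∀ t, |β' t| ≤ max M 0 := by
    intro t
    by_cases h : 0 ≤ t
    · simp only [hβ'def, if_pos h]
      exact (hM t h).trans (le_max_left _ _)
    · simp only [hβ'def, if_neg h, abs_zero]
      exact le_max_right _ _
  have hmean' : Tendsto (fun T : ℝ => (1 / T) * ∫ t in (0:ℝ)..T, β' t) atTop (nhds 0) := by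
    apply Tendsto.congr' _ hmean
    filter_upwards [eventually_ge_atTop (0:ℝ)] with T hT
    congr 1
    apply intervalIntegral.integral_congr
    intro t ht
    rw [Set.uIcc_of_le hT] at ht
    simp [hβ'def, ht.1]
  have key := RLAux.main hm' hb' hmean' f hf
  apply Tendsto.congr' _ key
  filter_upwards [eventually_gt_atTop (0:ℝ)] with N hN
  apply setIntegral_congr_fun measurableSet_Ioi
  intro t ht
  have : (0:ℝ) ≤ N * t := le_of_lt (mul_pos hN ht)
  simp [hβ'def, this]
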